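/- Let p > 0, δ > 0, and t = 1/(p+1). The set A = {|n|^{−p/(p+1)} n : n ∈ Z^d, n ≠ 0} ∪ {0} ⊆ R^d is (p, δ)-separated for all sufficiently small δ > 0, i.e., the balls B(a, δ⟨a⟩^{−p}) for a ∈ A are pairwise disjoint. -/

import Mathlib

open Metric

noncomputable def jb {d : ℕ} (x : EuclideanSpace ℝ (Fin d)) : ℝ := Real.sqrt (1 + ‖x‖ ^ 2)

noncomputable def intVec (d : ℕ) (n : Fin d → ℤ) : EuclideanSpace ℝ (Fin d) :=
  WithLp.toLp 2 (fun i => (n i : ℝ) : Fin d → ℝ)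

/-- The set `A = {|n|^{-p/(p+1)} n : 0 ≠ n ∈ ℤ^d} ∪ {0}`. -/
noncomputable def sqrtLattice (d : ℕ) (p : ℝ) : Set (EuclideanSpace ℝ (Fin d)) :=
  {0} ∪ ((fun n : Fin d → ℤ => ‖intVec d n‖ ^ (-(p / (p + 1))) • intVec d n) '' {n | n ≠ 0})

/-! ### Auxiliary lemmas -/

/-- Scalar inequality: for `0 ≤ a ≤ b`, `(b^p - a^p) * b ≤ max 1 p * (b^p * (b-a))`. -/
lemma aux_ratio {p a b : ℝ} (hp : 0 < p) (ha : 0 ≤ a) (hab : a ≤ b) :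
    (b ^ p - a ^ p) * b ≤ max 1 p * (b ^ p * (b - a)) := by
  have hb : 0 ≤ b := ha.trans hab
  rcases le_total p 1 with hp1 | hp1
  · rw [max_eq_left hp1]
    have key : a * b ^ p ≤ a ^ p * b := by
      rcases eq_or_lt_of_le ha with rfl | ha'
      · simp [Real.zero_rpow hp.ne']
      · have hb' : 0 < b := lt_of_lt_of_le ha' hab
        have e1 : a = a ^ p * a ^ (1 - p) := by
          rw [← Real.rpow_add ha', add_sub_cancel, Real.rpow_one]
        have e2 : b ^ (1 - p) * b ^ p = b := by
          rw [← Real.rpow_add hb', sub_add_cancel, Real.rpow_one]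
        have h3 : a ^ (1 - p) ≤ b ^ (1 - p) :=
          Real.rpow_le_rpow ha hab (by linarith)
        calc a * b ^ p = a ^ p * a ^ (1 - p) * b ^ p := by rw [← e1]
          _ = a ^ p * (a ^ (1 - p) * b ^ p) := by ring
          _ ≤ a ^ p * (b ^ (1 - p) * b ^ p) := by
              apply mul_le_mul_of_nonneg_left _ (Real.rpow_nonneg ha _)
              exact mul_le_mul_of_nonneg_right h3 (Real.rpow_nonneg hb _)
          _ = a ^ p * b := by rw [e2]
    nlinarith [key]
  · rw [max_eq_right hp1]
    rcases eq_or_lt_of_le hb with rfl | hb'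
    · have : a = 0 := le_antisymm hab ha
      simp [this, Real.zero_rpow hp.ne']
    · have hs : (-1 : ℝ) ≤ a / b - 1 := by
        have : 0 ≤ a / b := div_nonneg ha hb'.le
        linarith
      have hber := one_add_mul_self_le_rpow_one_add hs hp1
      have e : (1 : ℝ) + (a / b - 1) = a / b := by ring
      rw [e, Real.div_rpow ha hb'.le] at hber
      have hbp : 0 < b ^ p := Real.rpow_pos_of_pos hb' p
      rw [le_div_iff₀ hbp] at hber
      -- hber : (1 + p * (a / b - 1)) * b ^ p ≤ a ^ p
      have hmul := mul_le_mul_of_nonneg_right hber hb'.le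
      have hbne : b ≠ 0 := hb'.ne'
      have e2' : (1 + p * (a / b - 1)) * b = b - p * (b - a) := by
        field_simp
        ring
      have e2 : (1 + p * (a / b - 1)) * b ^ p * b = (b - p * (b - a)) * b ^ p := by
        rw [mul_right_comm, e2']
      rw [e2] at hmul
      nlinarith [hmul]

/-- Lipschitz-type bound for `x ↦ ‖x‖^p • x`, case `‖v‖ ≤ ‖u‖`. -/
lemma lip_aux {d : ℕ} {p : ℝ} (hp : 0 < p) (u v : EuclideanSpace ℝ (Fin d))
    (h : ‖v‖ ≤ ‖u‖) :
    ‖‖u‖ ^ p • u - ‖v‖ ^ p • v‖ ≤ (1 + max 1 p) * (‖u‖ ^ p * ‖u - v‖) := by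
  have hb := norm_nonneg v
  have decomp : ‖u‖ ^ p • u - ‖v‖ ^ p • v
      = ‖u‖ ^ p • (u - v) + (‖u‖ ^ p - ‖v‖ ^ p) • v := by
    rw [smul_sub, sub_smul]; abel
  have hple : ‖v‖ ^ p ≤ ‖u‖ ^ p := Real.rpow_le_rpow hb h hp.le
  have h1 : ‖(‖u‖ ^ p - ‖v‖ ^ p) • v‖ = (‖u‖ ^ p - ‖v‖ ^ p) * ‖v‖ := by
    rw [norm_smul, Real.norm_eq_abs, abs_of_nonneg (by linarith)]
  have h2 : ‖‖u‖ ^ p • (u - v)‖ = ‖u‖ ^ p * ‖u - v‖ := by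
    rw [norm_smul, Real.norm_eq_abs, abs_of_nonneg (Real.rpow_nonneg (norm_nonneg u) p)]
  have h3 : (‖u‖ ^ p - ‖v‖ ^ p) * ‖u‖ ≤ max 1 p * (‖u‖ ^ p * (‖u‖ - ‖v‖)) :=
    aux_ratio hp hb h
  have h4 : (‖u‖ ^ p - ‖v‖ ^ p) * ‖v‖ ≤ (‖u‖ ^ p - ‖v‖ ^ p) * ‖u‖ :=
    mul_le_mul_of_nonneg_left h (by linarith)
  have h5 : ‖u‖ - ‖v‖ ≤ ‖u - v‖ := by
    have := norm_sub_norm_le u v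
    linarith
  have h6 : max 1 p * (‖u‖ ^ p * (‖u‖ - ‖v‖)) ≤ max 1 p * (‖u‖ ^ p * ‖u - v‖) := by
    apply mul_le_mul_of_nonneg_left _ (le_trans zero_le_one (le_max_left 1 p))
    exact mul_le_mul_of_nonneg_left h5 (Real.rpow_nonneg (norm_nonneg u) p)
  calc ‖‖u‖ ^ p • u - ‖v‖ ^ p • v‖
      ≤ ‖‖u‖ ^ p • (u - v)‖ + ‖(‖u‖ ^ p - ‖v‖ ^ p) • v‖ := by
        rw [decomp]; exact norm_add_le _ _
    _ = ‖u‖ ^ p * ‖u - v‖ + (‖u‖ ^ p - ‖v‖ ^ p) * ‖v‖ := by rw [h1, h2]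
    _ ≤ ‖u‖ ^ p * ‖u - v‖ + max 1 p * (‖u‖ ^ p * ‖u - v‖) := by
        have := (h4.trans h3).trans h6
        linarith
    _ = (1 + max 1 p) * (‖u‖ ^ p * ‖u - v‖) := by ring

/-- Lipschitz bound for `x ↦ ‖x‖^p • x`. -/
lemma lipschitz_g {d : ℕ} {p : ℝ} (hp : 0 < p) (u v : EuclideanSpace ℝ (Fin d)) :
    ‖‖u‖ ^ p • u - ‖v‖ ^ p • v‖ ≤ (1 + max 1 p) * (max ‖u‖ ‖v‖ ^ p * ‖u - v‖) := by
  rcases le_total ‖v‖ ‖u‖ with h | h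
  · rw [max_eq_left h]
    exact lip_aux hp u v h
  · rw [max_eq_right h, norm_sub_rev, norm_sub_rev u v]
    exact lip_aux hp v u h

lemma one_le_norm_intVec {d : ℕ} {n : Fin d → ℤ} (hn : n ≠ 0) : 1 ≤ ‖intVec d n‖ := by
  obtain ⟨i, hi⟩ : ∃ i, n i ≠ 0 := by
    by_contra h
    push_neg at h
    exact hn (funext h)
  have h0 : (1 : ℤ) ≤ (n i) ^ 2 := by rcases hi.lt_or_gt with h | h <;> nlinarith
  have h1 : (1 : ℝ) ≤ ‖(intVec d n) i‖ ^ 2 := by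
    have : (intVec d n) i = (n i : ℝ) := rfl
    rw [this, Real.norm_eq_abs, sq_abs]
    exact_mod_cast h0
  rw [EuclideanSpace.norm_eq]
  have hsum : (1 : ℝ) ≤ ∑ j, ‖(intVec d n) j‖ ^ 2 := by
    refine h1.trans ?_
    exact Finset.single_le_sum (f := fun j => ‖(intVec d n) j‖ ^ 2)
      (fun j _ => sq_nonneg _) (Finset.mem_univ i)
  calc (1 : ℝ) = Real.sqrt 1 := Real.sqrt_one.symm
    _ ≤ _ := Real.sqrt_le_sqrt hsum

lemma norm_f {d : ℕ} {p : ℝ} (hp : 0 < p) {n : Fin d → ℤ} (hn : n ≠ 0) :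
    ‖(‖intVec d n‖ ^ (-(p / (p + 1))) • intVec d n : EuclideanSpace ℝ (Fin d))‖
      = ‖intVec d n‖ ^ (1 / (p + 1)) := by
  have h1 : 1 ≤ ‖intVec d n‖ := one_le_norm_intVec hn
  have h0 : 0 < ‖intVec d n‖ := lt_of_lt_of_le one_pos h1
  rw [norm_smul, Real.norm_eq_abs, abs_of_nonneg (Real.rpow_nonneg h0.le _),
    ← Real.rpow_add_one h0.ne']
  congr 1
  field_simp
  ring

lemma g_f {d : ℕ} {p : ℝ} (hp : 0 < p) {n : Fin d → ℤ} (hn : n ≠ 0) :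
    ‖(‖intVec d n‖ ^ (-(p / (p + 1))) • intVec d n : EuclideanSpace ℝ (Fin d))‖ ^ p
        • (‖intVec d n‖ ^ (-(p / (p + 1))) • intVec d n) = intVec d n := by
  have h1 : 1 ≤ ‖intVec d n‖ := one_le_norm_intVec hn
  have h0 : 0 < ‖intVec d n‖ := lt_of_lt_of_le one_pos h1
  rw [norm_f hp hn, ← Real.rpow_mul h0.le, smul_smul, ← Real.rpow_add h0]
  have e : 1 / (p + 1) * p + -(p / (p + 1)) = 0 := by field_simp; ring
  rw [e, Real.rpow_zero, one_smul]

lemma norm_le_jb {d : ℕ} (x : EuclideanSpace ℝ (Fin d)) : ‖x‖ ≤ jb x := by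
  have h := Real.sqrt_le_sqrt (show ‖x‖ ^ 2 ≤ 1 + ‖x‖ ^ 2 by linarith)
  rwa [Real.sqrt_sq (norm_nonneg x)] at h

lemma one_le_jb {d : ℕ} (x : EuclideanSpace ℝ (Fin d)) : 1 ≤ jb x := by
  have h := Real.sqrt_le_sqrt (show (1:ℝ) ≤ 1 + ‖x‖ ^ 2 by nlinarith [sq_nonneg ‖x‖])
  rwa [Real.sqrt_one] at h

lemma jb_rpow_le_one {d : ℕ} {p : ℝ} (hp : 0 < p) (x : EuclideanSpace ℝ (Fin d)) :
    jb x ^ (-p) ≤ 1 :=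
  Real.rpow_le_one_of_one_le_of_nonpos (one_le_jb x) (by linarith)

lemma jb_rpow_le {d : ℕ} {p : ℝ} (hp : 0 < p) {x : EuclideanSpace ℝ (Fin d)}
    (hx : 1 ≤ ‖x‖) : jb x ^ (-p) ≤ ‖x‖ ^ (-p) :=
  Real.rpow_le_rpow_of_nonpos (by linarith) (norm_le_jb x) (by linarith)

/-- The purely numeric separation step. -/
lemma real_step {p K δ A1 A2 D : ℝ} (hp : 0 < p) (hK : 1 ≤ K) (hδ : 0 < δ)
    (hδ2 : δ ≤ (2 * (2:ℝ) ^ p * K)⁻¹) (h1 : 1 ≤ A1) (h2 : 1 ≤ A2) (hA : A1 ≤ A2)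
    (hD1 : (K * A2 ^ p)⁻¹ ≤ D) (hD2 : A2 - A1 ≤ D) :
    δ * A1 ^ (-p) + δ * A2 ^ (-p) ≤ D := by
  have hA1 : (0:ℝ) < A1 := lt_of_lt_of_le one_pos h1
  have hA2 : (0:ℝ) < A2 := lt_of_lt_of_le one_pos h2
  have h2p : (1:ℝ) ≤ (2:ℝ) ^ p := Real.one_le_rpow one_le_two hp.le
  have h2ppos : (0:ℝ) < (2:ℝ) ^ p := lt_of_lt_of_le one_pos h2p
  rcases le_total A2 (2 * A1) with hc | hc
  · -- comparable case
    have hhalf : A2 / 2 ≤ A1 := by linarith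
    have hhalfpos : (0:ℝ) < A2 / 2 := by linarith
    have hb1 : A1 ^ (-p) ≤ (A2 / 2) ^ (-p) :=
      Real.rpow_le_rpow_of_nonpos hhalfpos hhalf (by linarith)
    have hb2 : (A2 / 2) ^ (-p) = (2:ℝ) ^ p * A2 ^ (-p) := by
      rw [Real.div_rpow hA2.le (by norm_num), Real.rpow_neg hA2.le, Real.rpow_neg (by norm_num : (0:ℝ) ≤ 2)]
      field_simp
    have hb3 : A2 ^ (-p) ≤ (2:ℝ) ^ p * A2 ^ (-p) := by
      nlinarith [Real.rpow_nonneg hA2.le (-p)]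
    have hδK : 2 * (2:ℝ) ^ p * δ ≤ K⁻¹ := by
      have hpos : (0:ℝ) < 2 * (2:ℝ) ^ p * K := by positivity
      have e : 2 * (2:ℝ) ^ p * (2 * (2:ℝ) ^ p * K)⁻¹ = K⁻¹ := by
        rw [mul_inv, mul_inv]
        field_simp
      calc 2 * (2:ℝ) ^ p * δ ≤ 2 * (2:ℝ) ^ p * (2 * (2:ℝ) ^ p * K)⁻¹ := by
            apply mul_le_mul_of_nonneg_left hδ2 (by positivity)
        _ = K⁻¹ := e
    have hKA : (K * A2 ^ p)⁻¹ = K⁻¹ * A2 ^ (-p) := by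
      rw [mul_inv, Real.rpow_neg hA2.le]
    calc δ * A1 ^ (-p) + δ * A2 ^ (-p)
        ≤ δ * ((2:ℝ) ^ p * A2 ^ (-p)) + δ * ((2:ℝ) ^ p * A2 ^ (-p)) :=
          add_le_add (mul_le_mul_of_nonneg_left (hb1.trans_eq hb2) hδ.le)
            (mul_le_mul_of_nonneg_left hb3 hδ.le)
      _ = 2 * (2:ℝ) ^ p * δ * A2 ^ (-p) := by ring
      _ ≤ K⁻¹ * A2 ^ (-p) :=
          mul_le_mul_of_nonneg_right hδK (Real.rpow_nonneg hA2.le _)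
      _ = (K * A2 ^ p)⁻¹ := hKA.symm
      _ ≤ D := hD1
  · -- spread case
    have hr1 : A1 ^ (-p) ≤ 1 :=
      Real.rpow_le_one_of_one_le_of_nonpos h1 (by linarith)
    have hr2 : A2 ^ (-p) ≤ 1 :=
      Real.rpow_le_one_of_one_le_of_nonpos h2 (by linarith)
    have hδhalf : 2 * δ ≤ 1 := by
      have hpos : (0:ℝ) < 2 * (2:ℝ) ^ p * K := by positivity
      have h2le : (2:ℝ) ≤ 2 * (2:ℝ) ^ p * K := by nlinarith
      have : (2 * (2:ℝ) ^ p * K)⁻¹ ≤ (2:ℝ)⁻¹ := by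
        apply inv_anti₀ (by norm_num) h2le
      nlinarith [hδ2.trans this]
    have hgap : (1:ℝ) ≤ A2 - A1 := by linarith
    have e1 : δ * A1 ^ (-p) ≤ δ := by nlinarith [Real.rpow_nonneg hA1.le (-p)]
    have e2 : δ * A2 ^ (-p) ≤ δ := by nlinarith [Real.rpow_nonneg hA2.le (-p)]
    linarith

/-- `A = {|n|^{-p/(p+1)} n} ∪ {0}` is `(p,δ)`-separated for all sufficiently small `δ > 0`:
the balls `B(a, δ ⟨a⟩^{-p})`, `a ∈ A`, are pairwise disjoint. -/
theorem sqrtLattice_separated (d : ℕ) (p : ℝ) (hp : 0 < p) :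
    ∃ δ₀ > (0 : ℝ), ∀ δ : ℝ, 0 < δ → δ ≤ δ₀ →
      (sqrtLattice d p).Pairwise fun a b =>
        Disjoint (ball a (δ * jb a ^ (-p))) (ball b (δ * jb b ^ (-p))) := by
  set K : ℝ := 1 + max 1 p with hKdef
  have hK : (1:ℝ) ≤ K := by
    have := le_max_left (1:ℝ) p
    simp only [hKdef]
    linarith
  have hKpos : (0:ℝ) < K := lt_of_lt_of_le one_pos hK
  have h2p : (1:ℝ) ≤ (2:ℝ) ^ p := Real.one_le_rpow one_le_two hp.le
  refine ⟨(2 * (2:ℝ) ^ p * K)⁻¹, by positivity, ?_⟩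
  intro δ hδ hδ2 a ha b hb hab
  have hδhalf : 2 * δ ≤ 1 := by
    have hpos : (0:ℝ) < 2 * (2:ℝ) ^ p * K := by positivity
    have h2le : (2:ℝ) ≤ 2 * (2:ℝ) ^ p * K := by nlinarith
    have : (2 * (2:ℝ) ^ p * K)⁻¹ ≤ (2:ℝ)⁻¹ :=
      inv_anti₀ (by norm_num) h2le
    nlinarith [hδ2.trans this]
  apply ball_disjoint_ball
  -- the key distance estimate
  have jb_zero : jb (0 : EuclideanSpace ℝ (Fin d)) = 1 := by simp [jb]
  -- zero vs lattice point case, stated for reuse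
  have zero_case : ∀ n : Fin d → ℤ, n ≠ 0 →
      δ * jb (0 : EuclideanSpace ℝ (Fin d)) ^ (-p)
        + δ * jb (‖intVec d n‖ ^ (-(p / (p + 1))) • intVec d n) ^ (-p)
      ≤ dist (0 : EuclideanSpace ℝ (Fin d)) (‖intVec d n‖ ^ (-(p / (p + 1))) • intVec d n) := by
    intro n hn
    have h1 : 1 ≤ ‖intVec d n‖ := one_le_norm_intVec hn
    have hdist : dist (0 : EuclideanSpace ℝ (Fin d))
        (‖intVec d n‖ ^ (-(p / (p + 1))) • intVec d n)
        = ‖intVec d n‖ ^ (1 / (p + 1)) := by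
      rw [dist_comm, dist_zero_right, norm_f hp hn]
    have hge : (1:ℝ) ≤ ‖intVec d n‖ ^ (1 / (p + 1)) :=
      Real.one_le_rpow h1 (by positivity)
    have hr2 : jb (‖intVec d n‖ ^ (-(p / (p + 1))) • intVec d n) ^ (-p) ≤ 1 :=
      jb_rpow_le_one hp _
    rw [jb_zero, Real.one_rpow, hdist]
    nlinarith
  -- main case: two distinct lattice points
  have main_case : ∀ m n : Fin d → ℤ, m ≠ 0 → n ≠ 0 →
      (‖intVec d m‖ ^ (-(p / (p + 1))) • intVec d m : EuclideanSpace ℝ (Fin d))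
        ≠ ‖intVec d n‖ ^ (-(p / (p + 1))) • intVec d n →
      δ * jb (‖intVec d m‖ ^ (-(p / (p + 1))) • intVec d m) ^ (-p)
        + δ * jb (‖intVec d n‖ ^ (-(p / (p + 1))) • intVec d n) ^ (-p)
      ≤ dist (‖intVec d m‖ ^ (-(p / (p + 1))) • intVec d m : EuclideanSpace ℝ (Fin d))
          (‖intVec d n‖ ^ (-(p / (p + 1))) • intVec d n) := by
    intro m n hm hn hmn
    set u : EuclideanSpace ℝ (Fin d) := ‖intVec d m‖ ^ (-(p / (p + 1))) • intVec d m with hu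
    set v : EuclideanSpace ℝ (Fin d) := ‖intVec d n‖ ^ (-(p / (p + 1))) • intVec d n with hv
    have hum : ‖u‖ = ‖intVec d m‖ ^ (1 / (p + 1)) := norm_f hp hm
    have hvn : ‖v‖ = ‖intVec d n‖ ^ (1 / (p + 1)) := norm_f hp hn
    have h1 : 1 ≤ ‖u‖ := by
      rw [hum]; exact Real.one_le_rpow (one_le_norm_intVec hm) (by positivity)
    have h2 : 1 ≤ ‖v‖ := by
      rw [hvn]; exact Real.one_le_rpow (one_le_norm_intVec hn) (by positivity)
    -- m ≠ n
    have hmn' : m ≠ n := by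
      intro h
      subst h
      exact hmn (by rw [hu, hv])
    -- intVec d m - intVec d n = intVec d (m - n)
    have hsub : intVec d m - intVec d n = intVec d (m - n) := by
      ext i
      simp [intVec]
    have hMN : 1 ≤ ‖intVec d m - intVec d n‖ := by
      rw [hsub]
      exact one_le_norm_intVec (sub_ne_zero_of_ne hmn')
    -- Lipschitz bound: ‖intVec m - intVec n‖ ≤ K * max ‖u‖ ‖v‖ ^ p * ‖u - v‖
    have hlip : ‖intVec d m - intVec d n‖ ≤ K * (max ‖u‖ ‖v‖ ^ p * ‖u - v‖) := by
      have := lipschitz_g hp u v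
      rwa [hu, hv, g_f hp hm, g_f hp hn, ← hu, ← hv, ← hKdef] at this
    have hmaxpos : (0:ℝ) < max ‖u‖ ‖v‖ ^ p := by
      apply Real.rpow_pos_of_pos
      exact lt_of_lt_of_le one_pos (le_trans h1 (le_max_left _ _))
    have hD1 : (K * max ‖u‖ ‖v‖ ^ p)⁻¹ ≤ ‖u - v‖ := by
      have hpos : (0:ℝ) < K * max ‖u‖ ‖v‖ ^ p := by positivity
      rw [← one_div, div_le_iff₀ hpos]
      calc (1:ℝ) ≤ ‖intVec d m - intVec d n‖ := hMN
        _ ≤ K * (max ‖u‖ ‖v‖ ^ p * ‖u - v‖) := hlip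
        _ = ‖u - v‖ * (K * max ‖u‖ ‖v‖ ^ p) := by ring
    have hjb1 : jb u ^ (-p) ≤ ‖u‖ ^ (-p) := jb_rpow_le hp h1
    have hjb2 : jb v ^ (-p) ≤ ‖v‖ ^ (-p) := jb_rpow_le hp h2
    have hdist : dist u v = ‖u - v‖ := dist_eq_norm u v
    have key : δ * ‖u‖ ^ (-p) + δ * ‖v‖ ^ (-p) ≤ ‖u - v‖ := by
      rcases le_total ‖u‖ ‖v‖ with hle | hle
      · have hmax : max ‖u‖ ‖v‖ = ‖v‖ := max_eq_right hle
        rw [hmax] at hD1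
        have hgap : ‖v‖ - ‖u‖ ≤ ‖u - v‖ := by
          have := norm_sub_norm_le v u
          rw [norm_sub_rev] at this
          linarith
        exact real_step hp hK hδ hδ2 h1 h2 hle hD1 hgap
      · have hmax : max ‖u‖ ‖v‖ = ‖u‖ := max_eq_left hle
        rw [hmax] at hD1
        have hgap : ‖u‖ - ‖v‖ ≤ ‖u - v‖ := by
          have := norm_sub_norm_le u v
          linarith
        have := real_step hp hK hδ hδ2 h2 h1 hle hD1 hgap
        linarith
    have e1 : δ * jb u ^ (-p) ≤ δ * ‖u‖ ^ (-p) :=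
      mul_le_mul_of_nonneg_left hjb1 hδ.le
    have e2 : δ * jb v ^ (-p) ≤ δ * ‖v‖ ^ (-p) :=
      mul_le_mul_of_nonneg_left hjb2 hδ.le
    rw [hdist]
    linarith
  simp only [sqrtLattice, Set.mem_union, Set.mem_singleton_iff, Set.mem_image,
    Set.mem_setOf_eq] at ha hb
  rcases ha with rfl | ⟨m, hm, rfl⟩ <;> rcases hb with rfl | ⟨n, hn, rfl⟩
  · exact absurd rfl hab
  · exact zero_case n hn
  · rw [dist_comm]
    have := zero_case m hm
    linarith
  · exact main_case m n hm hn hab
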